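/- Let K and K̃ be real symmetric positive semidefinite n×n matrices with K - K̃ positive semidefinite and ‖K - K̃‖ ≤ M·λ_{k+1}(K) with 0 ≤ M ≤ M̄, let β > 0, and let ξ > 1. If λ_{k+1}(K) ≤ β·(ξ - 1)/M̄, then with S = (K̃ + βI)^{-1/2}(K + βI)(K̃ + βI)^{-1/2} one has I ≤ S ≤ ξ·I in the Loewner order, i.e. the condition number of S is at most ξ. -/

import Mathlib

open scoped Matrix.Norms.L2Operator
open Matrix

/-- The square root of a positive semidefinite matrix, with its definition from the older
Mathlib (`Matrix.PosSemidef.sqrt`, since removed): `U * diagonal (√λ) * U⋆`. -/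
noncomputable def Matrix.PosSemidef.sqrt {n 𝕜 : Type*} [Fintype n] [DecidableEq n] [RCLike 𝕜]
    [PartialOrder 𝕜]
    {A : Matrix n n 𝕜} (hA : A.PosSemidef) : Matrix n n 𝕜 :=
  hA.1.eigenvectorUnitary.1 * diagonal ((↑) ∘ Real.sqrt ∘ hA.1.eigenvalues) *
    (star hA.1.eigenvectorUnitary : Matrix n n 𝕜)
open scoped RealInnerProductSpace

set_option maxHeartbeats 1000000

lemma aux_sqrt_mul_self {n : ℕ} {A : Matrix (Fin n) (Fin n) ℝ} (hA : A.PosSemidef) :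
    hA.sqrt * hA.sqrt = A := by
  have hU : (star hA.1.eigenvectorUnitary : Matrix (Fin n) (Fin n) ℝ) *
      hA.1.eigenvectorUnitary.1 = 1 := Unitary.star_mul_self_of_mem hA.1.eigenvectorUnitary.2
  conv_rhs => rw [hA.1.spectral_theorem, Unitary.conjStarAlgAut_apply]
  simp only [Matrix.PosSemidef.sqrt]
  rw [show ∀ a b c : Matrix (Fin n) (Fin n) ℝ, a * b * c * (a * b * c) = a * (b * (c * a) * b) * c
    from fun a b c => by simp only [Matrix.mul_assoc], hU, Matrix.mul_one, diagonal_mul_diagonal]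
  congr 3
  funext i
  simp [Real.mul_self_sqrt (hA.eigenvalues_nonneg i)]

lemma aux_sqrt_isHermitian {n : ℕ} {A : Matrix (Fin n) (Fin n) ℝ} (hA : A.PosSemidef) :
    hA.sqrt.IsHermitian := by
  simp [Matrix.IsHermitian, Matrix.PosSemidef.sqrt, Matrix.conjTranspose_mul, Matrix.mul_assoc,
    Matrix.star_eq_conjTranspose]

lemma aux_smul_psd {n : ℕ} {A : Matrix (Fin n) (Fin n) ℝ} (hA : A.PosSemidef)
    {c : ℝ} (hc : 0 ≤ c) : (c • A).PosSemidef := by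
  refine Matrix.PosSemidef.of_dotProduct_mulVec_nonneg ?_ (fun x => ?_)
  · rw [Matrix.IsHermitian, Matrix.conjTranspose_smul, star_trivial, hA.isHermitian.eq]
  · rw [Matrix.smul_mulVec, dotProduct_smul]
    exact mul_nonneg hc (hA.dotProduct_mulVec_nonneg x)

lemma aux_norm_psd {n : ℕ} {A : Matrix (Fin n) (Fin n) ℝ} (hA : A.IsHermitian)
    {c : ℝ} (hc : ‖A‖ ≤ c) : (c • (1 : Matrix (Fin n) (Fin n) ℝ) - A).PosSemidef := by
  refine Matrix.PosSemidef.of_dotProduct_mulVec_nonneg ?_ (fun x => ?_)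
  · rw [Matrix.IsHermitian, Matrix.conjTranspose_sub, Matrix.conjTranspose_smul, star_trivial,
      Matrix.conjTranspose_one, hA.eq]
  · rw [Matrix.sub_mulVec, Matrix.smul_mulVec, Matrix.one_mulVec,
      dotProduct_sub, dotProduct_smul, star_trivial]
    set y : EuclideanSpace ℝ (Fin n) := WithLp.toLp 2 x with hy
    have h1 : dotProduct x (A *ᵥ x) = ⟪y, WithLp.toLp 2 (A *ᵥ x)⟫ := by
      rw [hy, EuclideanSpace.inner_toLp_toLp, star_trivial, dotProduct_comm]
    have h2 : dotProduct x x = ‖y‖ ^ 2 := by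
      rw [← real_inner_self_eq_norm_sq, hy, EuclideanSpace.inner_toLp_toLp, star_trivial]
    have h3 : ⟪y, WithLp.toLp 2 (A *ᵥ x)⟫ ≤ ‖y‖ * (‖A‖ * ‖y‖) := by
      refine le_trans (real_inner_le_norm _ _) ?_
      have h4 := A.l2_opNorm_mulVec y
      exact mul_le_mul_of_nonneg_left h4 (norm_nonneg _)
    have hAn : (0:ℝ) ≤ ‖A‖ := norm_nonneg _
    have hyn : (0:ℝ) ≤ ‖y‖ := norm_nonneg _
    rw [h1, h2, smul_eq_mul]
    nlinarith [h3]



/-- If `K, K̃` are real symmetric PSD with `K - K̃` PSD,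
`‖K - K̃‖ ≤ M λ_{k+1}(K)` with `0 ≤ M ≤ M̄`, `β > 0`, `ξ > 1`, and
`λ_{k+1}(K) ≤ β (ξ - 1) / M̄`, then with `S = (K̃ + βI)^{-1/2} (K + βI) (K̃ + βI)^{-1/2}` one has
`I ≤ S ≤ ξ I` in the Loewner order, i.e. the condition number of `S` is at most `ξ`. -/
theorem stmt13 {n k : ℕ} (hk : k < n)
    (K Kt : Matrix (Fin n) (Fin n) ℝ)
    (hK : K.PosSemidef) (hKt : Kt.PosSemidef)
    (hdiff : (K - Kt).PosSemidef)
    (M Mbar : ℝ) (hM0 : 0 ≤ M) (hMM : M ≤ Mbar)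
    (μ : Fin n → ℝ) (hμanti : Antitone μ)
    (hμ : ∃ e : Equiv.Perm (Fin n), ∀ i, μ i = hK.isHermitian.eigenvalues (e i))
    (hnorm : ‖K - Kt‖ ≤ M * μ ⟨k, hk⟩)
    (β ξ : ℝ) (hβ : 0 < β) (hξ : 1 < ξ)
    (hlam : μ ⟨k, hk⟩ ≤ β * (ξ - 1) / Mbar)
    (h₁ : (Kt + β • (1 : Matrix (Fin n) (Fin n) ℝ)).PosSemidef)
    (S : Matrix (Fin n) (Fin n) ℝ)
    (hS : S = h₁.sqrt⁻¹ * (K + β • (1 : Matrix (Fin n) (Fin n) ℝ)) * h₁.sqrt⁻¹) :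
    (S - 1).PosSemidef ∧ (ξ • (1 : Matrix (Fin n) (Fin n) ℝ) - S).PosSemidef := by
  set A : Matrix (Fin n) (Fin n) ℝ := Kt + β • 1 with hAdef
  -- A is positive definite
  have hA : A.PosDef := by
    refine Matrix.PosDef.of_dotProduct_mulVec_pos h₁.isHermitian (fun x hx => ?_)
    rw [hAdef, Matrix.add_mulVec, dotProduct_add, Matrix.smul_mulVec,
      Matrix.one_mulVec, dotProduct_smul, star_trivial, smul_eq_mul]
    have hxx : 0 < dotProduct x x := by
      have := dotProduct_star_self_pos_iff (v := x) |>.mpr hx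
      simpa using this
    have := hKt.dotProduct_mulVec_nonneg x
    rw [star_trivial] at this
    nlinarith
  -- sqrt is invertible
  have hsq : h₁.sqrt * h₁.sqrt = A := aux_sqrt_mul_self h₁
  have hdet : h₁.sqrt.det ≠ 0 := by
    intro h
    have : A.det = 0 := by rw [← hsq, Matrix.det_mul, h, mul_zero]
    exact hA.det_pos.ne' this
  set R : Matrix (Fin n) (Fin n) ℝ := h₁.sqrt⁻¹ with hRdef
  have hRs : R * h₁.sqrt = 1 := Matrix.nonsing_inv_mul _ hdet.isUnit
  have hsR : h₁.sqrt * R = 1 := Matrix.mul_nonsing_inv _ hdet.isUnit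
  have hRAR : R * A * R = 1 := by
    rw [← hsq, ← Matrix.mul_assoc, Matrix.mul_assoc (R * h₁.sqrt), hsR, hRs, Matrix.mul_one]
  have hRH : Rᴴ = R := by
    rw [hRdef, Matrix.conjTranspose_nonsing_inv, (aux_sqrt_isHermitian h₁).eq]
  clear_value A R
  -- the norm bound
  have hμk : 0 ≤ μ ⟨k, hk⟩ := by
    obtain ⟨e, he⟩ := hμ
    rw [he]
    exact hK.eigenvalues_nonneg _
  have hMμ : M * μ ⟨k, hk⟩ ≤ (ξ - 1) * β := by
    rcases lt_or_eq_of_le (le_trans hM0 hMM) with hMb | hMb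
    · have h5 : Mbar * μ ⟨k, hk⟩ ≤ Mbar * (β * (ξ - 1) / Mbar) :=
        mul_le_mul_of_nonneg_left hlam (le_of_lt hMb)
      rw [mul_div_cancel₀ _ hMb.ne'] at h5
      nlinarith [mul_le_mul_of_nonneg_right hMM hμk]
    · have hM' : M = 0 := le_antisymm (hMb ▸ hMM) hM0
      rw [hM', zero_mul]
      nlinarith
  have hD : ‖K - Kt‖ ≤ (ξ - 1) * β := le_trans hnorm hMμ
  -- lower bound
  have hS1 : S - 1 = R * (K - Kt) * R := by
    have h6 : (K + β • (1 : Matrix (Fin n) (Fin n) ℝ)) - A = K - Kt := by rw [hAdef]; abel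
    calc S - 1 = R * (K + β • 1) * R - R * A * R := by rw [hS, hRAR]
    _ = R * ((K + β • 1) - A) * R := by rw [Matrix.mul_sub, Matrix.sub_mul]
    _ = R * (K - Kt) * R := by rw [h6]
  have hlow : (S - 1).PosSemidef := by
    rw [hS1]
    have h7 := hdiff.mul_mul_conjTranspose_same R
    rwa [hRH] at h7
  refine ⟨hlow, ?_⟩
  -- upper bound
  have hE : (ξ • A - (K + β • (1 : Matrix (Fin n) (Fin n) ℝ))).PosSemidef := by
    have heq : ξ • A - (K + β • (1 : Matrix (Fin n) (Fin n) ℝ)) =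
        (ξ - 1) • Kt + (((ξ - 1) * β) • (1 : Matrix (Fin n) (Fin n) ℝ) - (K - Kt)) := by
      rw [hAdef]
      module
    rw [heq]
    exact (aux_smul_psd hKt (by linarith)).add
      (aux_norm_psd hdiff.isHermitian hD)
  have hS2 : ξ • (1 : Matrix (Fin n) (Fin n) ℝ) - S =
      R * (ξ • A - (K + β • (1 : Matrix (Fin n) (Fin n) ℝ))) * R := by
    calc ξ • (1 : Matrix (Fin n) (Fin n) ℝ) - S
        = ξ • (R * A * R) - R * (K + β • 1) * R := by rw [hS, hRAR]
    _ = R * (ξ • A) * R - R * (K + β • 1) * R := by rw [Matrix.mul_smul, Matrix.smul_mul]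
    _ = R * (ξ • A - (K + β • 1)) * R := by rw [Matrix.mul_sub, Matrix.sub_mul]
  rw [hS2]
  have h8 := hE.mul_mul_conjTranspose_same R
  rwa [hRH] at h8
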